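/- Rokhlin-tower covering lemma: Let h : ℕ → ℕ and ε > 0. There exist N ∈ ℕ and finite intervals D_0, …, D_{N−1} ⊆ ℤ with |D_n| ≥ h(n), such that for every free p.m.p. action ℤ ↷ (X, μ) there is a Borel set A ⊆ X with μ(A) ≤ ε and μ({x ∈ X : D_n·x ⊆ A for some 0 ≤ n < N}) ≥ 1 − ε. -/

import Mathlib

open MeasureTheory Finset Filter
open scoped ENNReal

lemma avoid_finset (v : ℝ) (S : Finset ℝ) (hS : ∀ s ∈ S, s ≠ v) :
    ∃ l u : ℝ, l < v ∧ v < u ∧ ∀ s ∈ S, s ≤ l ∨ u ≤ s := by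
  classical
  induction S using Finset.induction_on with
  | empty => exact ⟨v - 1, v + 1, by linarith, by linarith, by simp⟩
  | @insert b T hbT ih =>
    obtain ⟨l, u, hl, hu, hall⟩ := ih (fun s hs => hS s (Finset.mem_insert_of_mem hs))
    have hbv : b ≠ v := hS b (Finset.mem_insert_self _ _)
    rcases lt_or_gt_of_ne hbv with hb | hb
    · refine ⟨max l b, u, by simp [hl, hb], hu, ?_⟩
      intro s hs
      rcases Finset.mem_insert.mp hs with rfl | hs
      · exact Or.inl (le_max_right _ _)
      · rcases hall s hs with h | h
        · exact Or.inl (le_max_of_le_left h)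
        · exact Or.inr h
    · refine ⟨l, min u b, hl, by simp [hu, hb], ?_⟩
      intro s hs
      rcases Finset.mem_insert.mp hs with rfl | hs
      · exact Or.inr (min_le_right _ _)
      · rcases hall s hs with h | h
        · exact Or.inl h
        · exact Or.inr (le_trans (min_le_left _ _) h)

theorem rokhlin_aux {X : Type} [MeasurableSpace X] [StandardBorelSpace X]
    (μ : Measure X) [IsProbabilityMeasure μ] (a : ℤ → X → X)
    (h0 : ∀ x, a 0 x = x) (hadd : ∀ (m n : ℤ) (x : X), a (m + n) x = a m (a n x))
    (hmp : ∀ n : ℤ, MeasurePreserving (a n) μ μ)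
    (hfree : ∀ᵐ x ∂μ, ∀ n : ℤ, n ≠ 0 → a n x ≠ x)
    (m M : ℕ) (hm : 0 < m) :
    ∃ R : Set X, MeasurableSet R ∧
      (∀ i j : ℕ, i < j → j < m → Disjoint ((a (-(i:ℤ)))⁻¹' R) ((a (-(j:ℤ)))⁻¹' R)) ∧
      μ ((⋃ j ∈ Finset.range m, (a (-(j:ℤ)))⁻¹' R)ᶜ) ≤ (m : ℝ≥0∞) / ((M : ℝ≥0∞) + 1) := by
  -- composition facts
  have hcomp : ∀ (k j : ℤ) (x : X), a k (a j x) = a (k + j) x := fun k j x => (hadd k j x).symm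
  -- measurable embedding into ℝ
  obtain ⟨femb, hfemb⟩ := exists_measurableEmbedding_real X
  -- basic rational-interval sets
  set AA : ℚ × ℚ → Set X := fun p => femb ⁻¹' Set.Ioo (p.1 : ℝ) (p.2 : ℝ) with hAAdef
  have hAA : ∀ p, MeasurableSet (AA p) := fun p => hfemb.measurable measurableSet_Ioo
  set CC : ℚ × ℚ → Set X :=
    fun p => AA p ∩ ⋂ j ∈ Finset.Icc (1:ℤ) (M:ℤ), (a j) ⁻¹' (AA p)ᶜ with hCCdef
  have hCC : ∀ p, MeasurableSet (CC p) := by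
    intro p
    refine (hAA p).inter (MeasurableSet.biInter (Finset.Icc (1:ℤ) (M:ℤ)).countable_toSet
      fun j _ => (hmp j).measurable (hAA p).compl)
  -- every point with free orbit lies in some CC p
  have hcover : ∀ x : X, (∀ n : ℤ, n ≠ 0 → a n x ≠ x) → ∃ p, x ∈ CC p := by
    intro x hx
    obtain ⟨l, u, hl, hu, hall⟩ := avoid_finset (femb x)
      ((Finset.Icc (1:ℤ) (M:ℤ)).image (fun j => femb (a j x))) (by
        intro s hs
        simp only [Finset.mem_image, Finset.mem_Icc] at hs
        obtain ⟨j, ⟨hj1, _⟩, rfl⟩ := hs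
        intro heq
        exact hx j (by omega) (hfemb.injective heq))
    obtain ⟨p, hp1, hp2⟩ := exists_rat_btwn hl
    obtain ⟨q, hq1, hq2⟩ := exists_rat_btwn hu
    refine ⟨(p, q), Set.mem_preimage.mpr ⟨hp2, hq1⟩, ?_⟩
    simp only [Set.mem_iInter]
    intro j hj
    simp only [Set.mem_preimage, Set.mem_compl_iff, hAAdef, Set.mem_Ioo, not_and]
    intro hlo hhi
    have hsS : femb (a j x) ∈ (Finset.Icc (1:ℤ) (M:ℤ)).image (fun j => femb (a j x)) :=
      Finset.mem_image.mpr ⟨j, hj, rfl⟩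
    rcases hall _ hsS with h' | h' <;> linarith
  -- enumerate the rational pairs
  obtain ⟨e, he⟩ := exists_surjective_nat (ℚ × ℚ)
  -- disjointified pieces
  set DD : ℕ → Set X := fun n => CC (e n) \
    ⋃ (j : ℕ) (_ : j < n), ⋃ k ∈ Finset.Icc (-(M:ℤ)) (M:ℤ), (a k) ⁻¹' CC (e j) with hDDdef
  have hDDm : ∀ n, MeasurableSet (DD n) := by
    intro n
    refine (hCC (e n)).diff ?_
    refine MeasurableSet.iUnion fun j => MeasurableSet.iUnion fun _ => ?_
    exact MeasurableSet.biUnion (Finset.Icc (-(M:ℤ)) (M:ℤ)).countable_toSet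
      fun k _ => (hmp k).measurable (hCC (e j))
  set B : Set X := ⋃ n, DD n with hBdef
  have hB : MeasurableSet B := MeasurableSet.iUnion hDDm
  -- separation of B
  have sep : ∀ (x : X) (d : ℤ), x ∈ B → 1 ≤ d → d ≤ (M:ℤ) → a d x ∈ B → False := by
    intro x d hxB hd1 hdM hdxB
    obtain ⟨n, hn⟩ := Set.mem_iUnion.mp hxB
    obtain ⟨n', hn'⟩ := Set.mem_iUnion.mp hdxB
    rcases lt_trichotomy n n' with hlt | rfl | hlt
    · -- a d x ∈ DD n' excludes a (-d) ⁻¹ CC (e n)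
      refine hn'.2 ?_
      refine Set.mem_iUnion.mpr ⟨n, Set.mem_iUnion.mpr ⟨hlt, ?_⟩⟩
      refine Set.mem_biUnion (Finset.mem_Icc.mpr ⟨by omega, by omega⟩ :
        (-d) ∈ Finset.Icc (-(M:ℤ)) (M:ℤ)) ?_
      show a (-d) (a d x) ∈ CC (e n)
      rw [hcomp, neg_add_cancel, h0]
      exact hn.1
    · -- same piece: contradiction with AA-avoidance
      have h1 : a d x ∈ AA (e n) := hn'.1.1
      have h2 : x ∈ ⋂ j ∈ Finset.Icc (1:ℤ) (M:ℤ), (a j) ⁻¹' (AA (e n))ᶜ := hn.1.2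
      have := Set.mem_iInter.mp h2 d
      simp only [Set.mem_iInter, Finset.mem_Icc] at this
      exact this ⟨hd1, hdM⟩ h1
    · refine hn.2 ?_
      refine Set.mem_iUnion.mpr ⟨n', Set.mem_iUnion.mpr ⟨hlt, ?_⟩⟩
      refine Set.mem_biUnion (Finset.mem_Icc.mpr ⟨by omega, by omega⟩ :
        d ∈ Finset.Icc (-(M:ℤ)) (M:ℤ)) ?_
      exact hn'.1
  -- sweeping out
  have sweep : ∀ n : ℕ, ∀ x : X, x ∈ CC (e n) → ∃ k : ℤ, a k x ∈ B := by
    intro n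
    induction n using Nat.strong_induction_on with
    | _ n ih =>
      intro x hx
      by_cases hxD : x ∈ DD n
      · exact ⟨0, by rw [h0]; exact Set.mem_iUnion.mpr ⟨n, hxD⟩⟩
      · have : x ∈ ⋃ (j : ℕ) (_ : j < n), ⋃ k ∈ Finset.Icc (-(M:ℤ)) (M:ℤ), (a k) ⁻¹' CC (e j) := by
          by_contra hc
          exact hxD ⟨hx, hc⟩
        obtain ⟨j, hj⟩ := Set.mem_iUnion.mp this
        obtain ⟨hjn, hj2⟩ := Set.mem_iUnion.mp hj
        obtain ⟨k, _, hk2⟩ := Set.mem_iUnion₂.mp hj2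
        obtain ⟨k', hk'⟩ := ih j hjn (a k x) hk2
        exact ⟨k' + k, by rw [hadd _ _ x]; exact hk'⟩
  -- iterates of the generator
  have iterf : ∀ (n : ℕ) (x : X), (a 1)^[n] x = a (n : ℤ) x := by
    intro n
    induction n with
    | zero => intro x; simp [h0]
    | succ n ih =>
      intro x
      rw [Function.iterate_succ_apply, ih (a 1 x), hcomp]
      have e : (n : ℤ) + 1 = ((n + 1 : ℕ) : ℤ) := by push_cast; ring
      rw [e]
  have iterb : ∀ (n : ℕ) (x : X), (a (-1))^[n] x = a (-(n : ℤ)) x := by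
    intro n
    induction n with
    | zero => intro x; simp [h0]
    | succ n ih =>
      intro x
      rw [Function.iterate_succ_apply, ih (a (-1) x), hcomp]
      have e : -(n : ℤ) + -1 = -((n + 1 : ℕ) : ℤ) := by push_cast; ring
      rw [e]
  -- recurrence: almost every point is good
  have hrecf := ((hmp 1).conservative).ae_mem_imp_frequently_image_mem hB.nullMeasurableSet
  have hrecb := ((hmp (-1)).conservative).ae_mem_imp_frequently_image_mem hB.nullMeasurableSet
  have hP : ∀ᵐ y ∂μ, y ∈ B →
      (∃ᶠ n : ℕ in atTop, a (n : ℤ) y ∈ B) ∧ (∃ᶠ n : ℕ in atTop, a (-(n : ℤ)) y ∈ B) := by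
    filter_upwards [hrecf, hrecb] with y h1 h2 hyB
    constructor
    · exact (h1 hyB).mono fun n hn => by rwa [iterf] at hn
    · exact (h2 hyB).mono fun n hn => by rwa [iterb] at hn
  have hgood : ∀ᵐ x ∂μ, (∀ n : ℤ, n ≠ 0 → a n x ≠ x) ∧
      ∀ k : ℤ, a k x ∈ B →
        (∃ᶠ n : ℕ in atTop, a ((n : ℤ) + k) x ∈ B) ∧
        (∃ᶠ n : ℕ in atTop, a (-(n : ℤ) + k) x ∈ B) := by
    refine hfree.and ?_
    rw [MeasureTheory.ae_all_iff]
    intro k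
    have hnull : μ {y | ¬ (y ∈ B →
        (∃ᶠ n : ℕ in atTop, a (n : ℤ) y ∈ B) ∧ (∃ᶠ n : ℕ in atTop, a (-(n : ℤ)) y ∈ B))} = 0 :=
      ae_iff.mp hP
    have hpre := (hmp k).quasiMeasurePreserving.preimage_null hnull
    rw [ae_iff]
    refine measure_mono_null ?_ hpre
    intro x hx
    simp only [Set.mem_setOf_eq, Set.mem_preimage] at hx ⊢
    intro hPy
    apply hx
    intro hmem
    obtain ⟨hf1, hf2⟩ := hPy hmem
    constructor
    · exact hf1.mono fun n hn => by rwa [hcomp] at hn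
    · exact hf2.mono fun n hn => by rwa [hcomp] at hn
  classical
  -- the Rokhlin base
  set R : Set X := (⋃ (d : ℕ) (_ : m ∣ d), (((a (-(d:ℤ)))⁻¹' B) ∩
      ⋂ (j : ℕ) (_ : j < d), ((a (-(j:ℤ)))⁻¹' B)ᶜ)) ∩
      ⋂ (t : ℕ) (_ : 1 ≤ t) (_ : t < m), ((a (t:ℤ))⁻¹' B)ᶜ with hRdef
  have hRm : MeasurableSet R := by
    refine MeasurableSet.inter ?_ ?_
    · refine MeasurableSet.iUnion fun d => MeasurableSet.iUnion fun _ => ?_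
      refine ((hmp _).measurable hB).inter ?_
      exact MeasurableSet.iInter fun j => MeasurableSet.iInter fun _ =>
        ((hmp _).measurable hB).compl
    · exact MeasurableSet.iInter fun t => MeasurableSet.iInter fun _ =>
        MeasurableSet.iInter fun _ => ((hmp _).measurable hB).compl
  have hRmem : ∀ x : X, x ∈ R ↔
      ((∃ d : ℕ, m ∣ d ∧ a (-(d:ℤ)) x ∈ B ∧ ∀ j : ℕ, j < d → a (-(j:ℤ)) x ∉ B) ∧
       (∀ t : ℕ, 1 ≤ t → t < m → a (t:ℤ) x ∉ B)) := by
    intro x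
    simp only [hRdef, Set.mem_inter_iff, Set.mem_iUnion, Set.mem_iInter, Set.mem_preimage,
      Set.mem_compl_iff, exists_prop]
  -- core disjointness
  have core : ∀ (v : X) (d : ℕ), 1 ≤ d → d < m → v ∈ R → a (d:ℤ) v ∈ R → False := by
    intro v d hd1 hdm hv hz
    obtain ⟨⟨dv, hdvd, hdvB, hdvmin⟩, hvf⟩ := (hRmem v).mp hv
    obtain ⟨⟨dz, hdzd, hdzB, hdzmin⟩, -⟩ := (hRmem _).mp hz
    have hdz_eq : dz = d + dv := by
      rcases lt_trichotomy dz (d + dv) with hlt | heq | hgt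
      · exfalso
        rcases lt_or_ge dz d with hc | hc
        · have e : -(dz:ℤ) + (d:ℤ) = (((d - dz : ℕ)) : ℤ) := by omega
          rw [hcomp, e] at hdzB
          exact hvf (d - dz) (by omega) (by omega) hdzB
        · have e : -(dz:ℤ) + (d:ℤ) = -(((dz - d : ℕ)) : ℤ) := by omega
          rw [hcomp, e] at hdzB
          exact hdvmin (dz - d) (by omega) hdzB
      · exact heq
      · exfalso
        have e : -(((d + dv : ℕ)) : ℤ) + (d:ℤ) = -(dv:ℤ) := by omega
        have : a (-(((d + dv : ℕ)) : ℤ)) (a (d:ℤ) v) ∈ B := by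
          rw [hcomp, e]; exact hdvB
        exact hdzmin (d + dv) hgt this
    have hdvd' : m ∣ d := by
      have h1 : m ∣ dz - dv := Nat.dvd_sub hdzd hdvd
      have h2 : dz - dv = d := by omega
      rwa [h2] at h1
    have := Nat.le_of_dvd (by omega) hdvd'
    omega
  have hdisj : ∀ i j : ℕ, i < j → j < m →
      Disjoint ((a (-(i:ℤ)))⁻¹' R) ((a (-(j:ℤ)))⁻¹' R) := by
    intro i j hij hjm
    rw [Set.disjoint_left]
    intro x hxi hxj
    have hv : a (-(j:ℤ)) x ∈ R := hxj
    have hz : a ((j - i : ℕ) : ℤ) (a (-(j:ℤ)) x) ∈ R := by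
      have e : ((j - i : ℕ) : ℤ) + (-(j:ℤ)) = -(i:ℤ) := by omega
      rw [hcomp, e]; exact hxi
    exact core _ (j - i) (by omega) (by omega) hv hz
  -- coverage
  have cov : ∀ x : X, (∃ d : ℕ, a (-(d:ℤ)) x ∈ B) → (∃ t : ℕ, 1 ≤ t ∧ a (t:ℤ) x ∈ B) →
      (∃ i : ℕ, i < m ∧ a (-(i:ℤ)) x ∈ R) ∨ (∃ t : ℕ, 1 ≤ t ∧ t < m ∧ a (t:ℤ) x ∈ B) := by
    intro x hexd hext
    set dx := Nat.find hexd with hdxdef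
    have hdxB : a (-(dx:ℤ)) x ∈ B := Nat.find_spec hexd
    have hdxmin : ∀ j : ℕ, j < dx → a (-(j:ℤ)) x ∉ B := fun j hj => Nat.find_min hexd hj
    set tx := Nat.find hext with htxdef
    have htxs : 1 ≤ tx ∧ a (tx:ℤ) x ∈ B := Nat.find_spec hext
    have htxmin : ∀ t : ℕ, t < tx → ¬(1 ≤ t ∧ a (t:ℤ) x ∈ B) := fun t ht => Nat.find_min hext ht
    have him : dx % m ≤ dx := Nat.mod_le _ _
    by_cases hcase : m ≤ tx + dx % m
    · left
      refine ⟨dx % m, Nat.mod_lt _ hm, ?_⟩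
      rw [hRmem]
      refine ⟨⟨dx - dx % m, ?_, ?_, ?_⟩, ?_⟩
      · have := Nat.div_add_mod dx m
        exact ⟨dx / m, by omega⟩
      · have e : -(((dx - dx % m : ℕ)) : ℤ) + -((dx % m : ℕ) : ℤ) = -(dx:ℤ) := by omega
        rw [hcomp, e]; exact hdxB
      · intro j hj
        have e : -(j : ℤ) + -((dx % m : ℕ) : ℤ) = -(((j + dx % m : ℕ)) : ℤ) := by omega
        rw [hcomp, e]
        exact hdxmin _ (by omega)
      · intro t ht1 htm
        rcases le_or_gt t (dx % m) with hti | hti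
        · have e : (t : ℤ) + -((dx % m : ℕ) : ℤ) = -(((dx % m - t : ℕ)) : ℤ) := by omega
          rw [hcomp, e]
          exact hdxmin _ (by omega)
        · have e : (t : ℤ) + -((dx % m : ℕ) : ℤ) = ((t - dx % m : ℕ) : ℤ) := by omega
          rw [hcomp, e]
          intro hBmem
          exact htxmin (t - dx % m) (by omega) ⟨by omega, hBmem⟩
    · right
      exact ⟨tx, htxs.1, by omega, htxs.2⟩
  refine ⟨R, hRm, hdisj, ?_⟩
  -- a.e. covering
  have hUV : ∀ᵐ x ∂μ, x ∈ (⋃ j ∈ Finset.range m, (a (-(j:ℤ)))⁻¹' R)ᶜ →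
      x ∈ ⋃ t ∈ Finset.Ico 1 m, (a (t:ℤ))⁻¹' B := by
    filter_upwards [hgood] with x hx
    intro hxU
    obtain ⟨p, hxp⟩ := hcover x hx.1
    obtain ⟨n, rfl⟩ := he p
    obtain ⟨k, hkB⟩ := sweep n x hxp
    obtain ⟨hf1, hf2⟩ := hx.2 k hkB
    obtain ⟨n1, hn1ge, hn1B⟩ := Filter.frequently_atTop.mp hf1 ((1 - k).toNat)
    obtain ⟨n2, hn2ge, hn2B⟩ := Filter.frequently_atTop.mp hf2 (k.toNat)
    have hext : ∃ t : ℕ, 1 ≤ t ∧ a (t:ℤ) x ∈ B := by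
      refine ⟨((n1:ℤ) + k).toNat, by omega, ?_⟩
      have e : ((((n1:ℤ) + k).toNat : ℕ) : ℤ) = (n1:ℤ) + k := by omega
      rw [e]; exact hn1B
    have hexd : ∃ d : ℕ, a (-(d:ℤ)) x ∈ B := by
      refine ⟨((n2:ℤ) - k).toNat, ?_⟩
      have e : -((((n2:ℤ) - k).toNat : ℕ) : ℤ) = -(n2:ℤ) + k := by omega
      rw [e]; exact hn2B
    rcases cov x hexd hext with ⟨i, him, hiR⟩ | ⟨t, ht1, htm, htB⟩
    · exact absurd (Set.mem_biUnion (Finset.mem_range.mpr him) hiR) hxU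
    · exact Set.mem_biUnion (Finset.mem_Ico.mpr ⟨ht1, htm⟩) htB
  have step1 : μ ((⋃ j ∈ Finset.range m, (a (-(j:ℤ)))⁻¹' R)ᶜ) ≤
      μ (⋃ t ∈ Finset.Ico 1 m, (a (t:ℤ))⁻¹' B) := measure_mono_ae hUV
  have step2 : μ (⋃ t ∈ Finset.Ico 1 m, (a (t:ℤ))⁻¹' B) ≤ (m : ℝ≥0∞) * μ B := by
    calc μ (⋃ t ∈ Finset.Ico 1 m, (a (t:ℤ))⁻¹' B)
        ≤ ∑ t ∈ Finset.Ico 1 m, μ ((a (t:ℤ))⁻¹' B) := measure_biUnion_finset_le _ _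
      _ = ∑ t ∈ Finset.Ico 1 m, μ B := Finset.sum_congr rfl
          (fun t _ => (hmp _).measure_preimage hB.nullMeasurableSet)
      _ = (m - 1 : ℕ) • μ B := by rw [Finset.sum_const, Nat.card_Ico]
      _ = ((m - 1 : ℕ) : ℝ≥0∞) * μ B := by rw [nsmul_eq_mul]
      _ ≤ (m : ℝ≥0∞) * μ B := by
          exact mul_le_mul_left (Nat.cast_le.mpr (Nat.sub_le m 1)) _
  -- bound on μ B
  have hBdisj : ∀ i j : ℕ, i < j → j ≤ M →
      Disjoint ((a (-(i:ℤ)))⁻¹' B) ((a (-(j:ℤ)))⁻¹' B) := by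
    intro i j hij hjM
    rw [Set.disjoint_left]
    intro x hxi hxj
    have hz : a ((j - i : ℕ) : ℤ) (a (-(j:ℤ)) x) ∈ B := by
      have e : ((j - i : ℕ) : ℤ) + (-(j:ℤ)) = -(i:ℤ) := by omega
      rw [hcomp, e]; exact hxi
    exact sep _ _ hxj (by omega) (by omega) hz
  have hMB : ((M : ℝ≥0∞) + 1) * μ B ≤ 1 := by
    have hpd : Set.PairwiseDisjoint ↑(Finset.range (M + 1))
        (fun i : ℕ => (a (-(i:ℤ)))⁻¹' B) := by
      intro i hi j hj hne
      simp only [Finset.coe_range, Set.mem_Iio] at hi hj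
      rcases lt_or_gt_of_ne hne with hlt | hlt
      · exact hBdisj i j hlt (by omega)
      · exact (hBdisj j i hlt (by omega)).symm
    have := measure_biUnion_finset (μ := μ) hpd (fun i _ => (hmp _).measurable hB)
    have hle : μ (⋃ i ∈ Finset.range (M + 1), (a (-(i:ℤ)))⁻¹' B) ≤ 1 := prob_le_one
    rw [this] at hle
    have heq : ∑ i ∈ Finset.range (M + 1), μ ((a (-(i:ℤ)))⁻¹' B)
        = ((M + 1 : ℕ) : ℝ≥0∞) * μ B := by
      rw [Finset.sum_congr rfl (fun i _ => (hmp _).measure_preimage hB.nullMeasurableSet),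
        Finset.sum_const, Finset.card_range, nsmul_eq_mul]
    rw [heq] at hle
    convert hle using 2
    push_cast
    ring
  have hfin : (m : ℝ≥0∞) * μ B ≤ (m : ℝ≥0∞) / ((M : ℝ≥0∞) + 1) := by
    rw [ENNReal.le_div_iff_mul_le (Or.inl (by simp)) (Or.inl (by finiteness))]
    calc (m : ℝ≥0∞) * μ B * ((M : ℝ≥0∞) + 1) = (m : ℝ≥0∞) * (((M : ℝ≥0∞) + 1) * μ B) := by ring
      _ ≤ (m : ℝ≥0∞) * 1 := mul_le_mul_right hMB _
      _ = (m : ℝ≥0∞) := mul_one _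
  exact le_trans step1 (le_trans step2 hfin)

/-- Rokhlin-tower covering lemma. For every `h : ℕ → ℕ` and `ε > 0`
there are `N` and finite intervals `D_0, …, D_{N−1} ⊆ ℤ` with `|D_n| ≥ h n`, such
that for every free p.m.p. action of `ℤ` on a standard probability space `(X, μ)`
there is a Borel set `A` with `μ(A) ≤ ε` and
`μ {x : D_n · x ⊆ A for some n < N} ≥ 1 − ε`. -/
theorem rokhlin_tower_covering
    (h : ℕ → ℕ) (ε : ℝ) (hε : 0 < ε) :
    ∃ (N : ℕ) (D : ℕ → Finset ℤ), 0 < N ∧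
      (∀ n < N, ∃ s ℓ : ℤ, 0 < ℓ ∧ D n = Finset.Icc s (s + ℓ - 1)) ∧
      (∀ n < N, h n ≤ (D n).card) ∧
      ∀ (X : Type) [MeasurableSpace X] [StandardBorelSpace X]
        (μ : Measure X) [IsProbabilityMeasure μ] (a : ℤ → X → X),
        (∀ x : X, a 0 x = x) →
        (∀ (m n : ℤ) (x : X), a (m + n) x = a m (a n x)) →
        (∀ n : ℤ, MeasurePreserving (a n) μ μ) →
        (∀ᵐ x ∂μ, ∀ n : ℤ, n ≠ 0 → a n x ≠ x) →
        ∃ A : Set X, MeasurableSet A ∧ μ A ≤ ENNReal.ofReal ε ∧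
          ENNReal.ofReal (1 - ε) ≤ μ {x | ∃ n < N, ∀ i ∈ D n, a i x ∈ A} := by
  classical
  set K : ℕ := ⌈(2:ℝ)/ε⌉₊ with hKdef
  have hK1 : 1 ≤ K := by
    rw [hKdef]
    have : (0:ℝ) < 2/ε := by positivity
    exact Nat.one_le_iff_ne_zero.mpr (by
      intro hc
      have := Nat.ceil_eq_zero.mp hc
      linarith)
  have hKε : 2 ≤ (K:ℝ) * ε := by
    have h1 : (2:ℝ)/ε ≤ (K:ℝ) := Nat.le_ceil _
    calc (2:ℝ) = (2/ε) * ε := by field_simp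
      _ ≤ (K:ℝ) * ε := by nlinarith
  set N : ℕ := 2 * K with hNdef
  have hN : 0 < N := by omega
  set ℓ : ℕ := max ((Finset.range N).sup h) 1 with hℓdef
  have hℓ : 1 ≤ ℓ := le_max_right _ _
  have hhℓ : ∀ n < N, h n ≤ ℓ :=
    fun n hn => le_trans (Finset.le_sup (Finset.mem_range.mpr hn)) (le_max_left _ _)
  refine ⟨N, fun n => Finset.Icc (-((n * ℓ : ℕ) : ℤ)) (-((n * ℓ : ℕ) : ℤ) + (ℓ:ℕ) - 1),
    hN, ?_, ?_, ?_⟩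
  · intro n _
    exact ⟨-((n * ℓ : ℕ) : ℤ), (ℓ:ℕ), by exact_mod_cast hℓ, rfl⟩
  · intro n hn
    rw [Int.card_Icc]
    have e : (-((n * ℓ : ℕ) : ℤ) + (ℓ:ℕ) - 1 + 1 - (-((n * ℓ : ℕ) : ℤ))) = (ℓ:ℕ) := by ring
    rw [e, Int.toNat_natCast]
    exact hhℓ n hn
  intro X _ _ μ _ a h0 hadd hmp hfree
  have hcomp : ∀ (k j : ℤ) (x : X), a k (a j x) = a (k + j) x := fun k j x => (hadd k j x).symm
  by_cases hε1 : (1:ℝ) ≤ ε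
  · refine ⟨Set.univ, MeasurableSet.univ, ?_, ?_⟩
    · rw [measure_univ]
      exact ENNReal.one_le_ofReal.mpr hε1
    · have hset : {x : X | ∃ n < N, ∀ i ∈ Finset.Icc (-((n * ℓ : ℕ) : ℤ))
          (-((n * ℓ : ℕ) : ℤ) + (ℓ:ℕ) - 1), a i x ∈ Set.univ} = Set.univ := by
        ext x
        simp only [Set.mem_setOf_eq, Set.mem_univ, iff_true]
        exact ⟨0, hN, fun i _ => trivial⟩
      rw [hset, measure_univ]
      exact ENNReal.ofReal_le_one.mpr (by linarith)
  push_neg at hε1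
  obtain ⟨R, hRm, hdisj, hcov⟩ := rokhlin_aux μ a h0 hadd hmp hfree (N * ℓ) (N * ℓ * K)
    (by positivity)
  set A : Set X := ⋃ k ∈ Finset.range (2 * ℓ), (a (-(k:ℤ)))⁻¹' R with hAdef
  have hAm : MeasurableSet A :=
    MeasurableSet.biUnion (Finset.range (2*ℓ)).countable_toSet
      (fun k _ => (hmp _).measurable hRm)
  -- sum of the full tower
  have hpd : Set.PairwiseDisjoint ↑(Finset.range (N * ℓ))
      (fun j : ℕ => (a (-(j:ℤ)))⁻¹' R) := by
    intro i hi j hj hne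
    simp only [Finset.coe_range, Set.mem_Iio] at hi hj
    rcases lt_or_gt_of_ne hne with hlt | hlt
    · exact hdisj i j hlt hj
    · exact (hdisj j i hlt hi).symm
  have htower : ((N * ℓ : ℕ) : ℝ≥0∞) * μ R ≤ 1 := by
    have heq := measure_biUnion_finset (μ := μ) hpd (fun i _ => (hmp _).measurable hRm)
    have hle : μ (⋃ j ∈ Finset.range (N * ℓ), (a (-(j:ℤ)))⁻¹' R) ≤ 1 := prob_le_one
    rw [heq, Finset.sum_congr rfl
      (fun j _ => (hmp _).measure_preimage hRm.nullMeasurableSet),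
      Finset.sum_const, Finset.card_range, nsmul_eq_mul] at hle
    exact hle
  have hKne : (K : ℝ≥0∞) ≠ 0 := by exact_mod_cast (by omega : K ≠ 0)
  have hKnt : (K : ℝ≥0∞) ≠ ⊤ := ENNReal.natCast_ne_top K
  have hKof : 1 ≤ (K : ℝ≥0∞) * ENNReal.ofReal ε := by
    have : (K : ℝ≥0∞) = ENNReal.ofReal (K : ℝ) := (ENNReal.ofReal_natCast K).symm
    rw [this, ← ENNReal.ofReal_mul (by positivity)]
    exact ENNReal.one_le_ofReal.mpr (by linarith)
  -- μ A ≤ ε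
  have hμA : μ A ≤ ENNReal.ofReal ε := by
    have h1 : μ A ≤ ((2 * ℓ : ℕ) : ℝ≥0∞) * μ R := by
      calc μ A ≤ ∑ k ∈ Finset.range (2 * ℓ), μ ((a (-(k:ℤ)))⁻¹' R) :=
            measure_biUnion_finset_le _ _
        _ = ∑ _k ∈ Finset.range (2 * ℓ), μ R := Finset.sum_congr rfl
            (fun k _ => (hmp _).measure_preimage hRm.nullMeasurableSet)
        _ = ((2 * ℓ : ℕ) : ℝ≥0∞) * μ R := by
            rw [Finset.sum_const, Finset.card_range, nsmul_eq_mul]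
    have h2 : (K : ℝ≥0∞) * (((2 * ℓ : ℕ) : ℝ≥0∞) * μ R) ≤ 1 := by
      have e : (K : ℝ≥0∞) * (((2 * ℓ : ℕ) : ℝ≥0∞) * μ R) = ((N * ℓ : ℕ) : ℝ≥0∞) * μ R := by
        rw [hNdef]; push_cast; ring
      rw [e]; exact htower
    have h3 : (K : ℝ≥0∞) * (((2 * ℓ : ℕ) : ℝ≥0∞) * μ R) ≤ (K : ℝ≥0∞) * ENNReal.ofReal ε :=
      le_trans h2 hKof
    exact le_trans h1 ((ENNReal.mul_le_mul_iff_right hKne hKnt).mp h3)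
  -- residual bound
  have hres : μ ((⋃ j ∈ Finset.range (N * ℓ), (a (-(j:ℤ)))⁻¹' R)ᶜ) ≤ ENNReal.ofReal ε := by
    refine le_trans hcov ?_
    rw [ENNReal.div_le_iff_le_mul (Or.inl (by simp)) (Or.inl (by finiteness))]
    calc ((N * ℓ : ℕ) : ℝ≥0∞) = 1 * ((N * ℓ : ℕ) : ℝ≥0∞) := (one_mul _).symm
      _ ≤ ((K : ℝ≥0∞) * ENNReal.ofReal ε) * ((N * ℓ : ℕ) : ℝ≥0∞) :=
          mul_le_mul_left hKof _
      _ = ENNReal.ofReal ε * (((N * ℓ * K : ℕ) : ℝ≥0∞)) := by push_cast; ring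
      _ ≤ ENNReal.ofReal ε * (((N * ℓ * K : ℕ) : ℝ≥0∞) + 1) := by
          exact mul_le_mul_right le_self_add _
  -- tower is inside the good set
  have hsub : (⋃ j ∈ Finset.range (N * ℓ), (a (-(j:ℤ)))⁻¹' R) ⊆
      {x : X | ∃ n < N, ∀ i ∈ Finset.Icc (-((n * ℓ : ℕ) : ℤ))
        (-((n * ℓ : ℕ) : ℤ) + (ℓ:ℕ) - 1), a i x ∈ A} := by
    intro x hx
    obtain ⟨j, hj, hW⟩ := Set.mem_iUnion₂.mp hx
    rw [Finset.mem_range] at hj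
    have hW : a (-(j:ℤ)) x ∈ R := hW
    have hn : j / ℓ < N := (Nat.div_lt_iff_lt_mul (by omega)).mpr hj
    refine ⟨j / ℓ, hn, ?_⟩
    intro i hi
    rw [Finset.mem_Icc] at hi
    have e1 : (j / ℓ * ℓ : ℕ) = j - j % ℓ := by
      have := Nat.div_add_mod j ℓ
      rw [Nat.mul_comm]
      omega
    have hrlt : j % ℓ < ℓ := Nat.mod_lt _ (by omega)
    have hrle : j % ℓ ≤ j := Nat.mod_le _ _
    obtain ⟨k, hk1, hk2⟩ : ∃ k : ℕ, k < 2 * ℓ ∧ (k:ℤ) = i + j := by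
      refine ⟨(i + j).toNat, by omega, by omega⟩
    refine Set.mem_biUnion (Finset.mem_range.mpr hk1) ?_
    show a (-(k:ℤ)) (a i x) ∈ R
    have e2 : -(k:ℤ) + i = -(j:ℤ) := by omega
    rw [hcomp, e2]
    exact hW
  -- finish
  refine ⟨A, hAm, hμA, ?_⟩
  have hUm : MeasurableSet (⋃ j ∈ Finset.range (N * ℓ), (a (-(j:ℤ)))⁻¹' R) :=
    MeasurableSet.biUnion (Finset.range (N*ℓ)).countable_toSet
      (fun j _ => (hmp _).measurable hRm)
  have htot := measure_add_measure_compl (μ := μ) hUm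
  have hofeq : ENNReal.ofReal (1 - ε) + ENNReal.ofReal ε = 1 := by
    rw [← ENNReal.ofReal_add (by linarith) (le_of_lt hε)]
    norm_num
  have hfinal : ENNReal.ofReal (1 - ε) ≤
      μ (⋃ j ∈ Finset.range (N * ℓ), (a (-(j:ℤ)))⁻¹' R) := by
    refine (ENNReal.add_le_add_iff_right (ENNReal.ofReal_ne_top (r := ε))).mp ?_
    rw [hofeq]
    calc (1 : ℝ≥0∞) = μ (⋃ j ∈ Finset.range (N * ℓ), (a (-(j:ℤ)))⁻¹' R) +
          μ ((⋃ j ∈ Finset.range (N * ℓ), (a (-(j:ℤ)))⁻¹' R)ᶜ) := by rw [htot, measure_univ]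
      _ ≤ μ (⋃ j ∈ Finset.range (N * ℓ), (a (-(j:ℤ)))⁻¹' R) + ENNReal.ofReal ε :=
          add_le_add_right hres _
  exact le_trans hfinal (measure_mono hsub)
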